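/- arXiv:2209.13198 — 2 statements merged into one kernel-verified Lean document; each statement's English description precedes it below -/
import Mathlib

section
/- Let S be a generalized inverse of Ṽ. Then the following four conditions are equivalent: (1) ker(I_{E^{⊗m}} ⊗ S) ⊆ ran(S^(m)) for every m ≥ 1; (2) ker(I_E ⊗ S^(n)) ⊆ ran(S) for every n ≥ 1; (3) ker(I_{E^{⊗m}} ⊗ S^(n)) ⊆ ran(S^(m)) for all n, m ≥ 1; (4) ker(I_{E^{⊗m}} ⊗ S^(n)) = S^(m)(ker S^(m+n)) for all n, m ≥ 1. -/
open scoped InnerProductSpace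

noncomputable section

variable (H : Type) [NormedAddCommGroup H] [InnerProductSpace ℂ H]

/-- Words of length `n` in the alphabet `{1,…,d}`. -/
abbrev Word (d n : ℕ) := Fin n → Fin d

/-- `H_n`: the ℓ²-direct sum of copies of `H` indexed by words of length `n`. -/
abbrev Hn (d n : ℕ) := PiLp 2 (fun _ : Word d n => H)

instance instHnCompleteSpace [CompleteSpace H] (d n : ℕ) : CompleteSpace (Hn H d n) :=
  ((PiLp.continuousLinearEquiv 2 ℂ (fun _ : Word d n => H)).isUniformEmbedding.completeSpace_congr
    (PiLp.continuousLinearEquiv 2 ℂ (fun _ : Word d n => H)).surjective).mpr inferInstance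

/-- The coordinate projection `H_m → H` at the word `α`. -/
def coord (d m : ℕ) (α : Word d m) : Hn H d m →L[ℂ] H :=
  PiLp.proj 2 (fun _ : Word d m => H) α

/-- The embedding `H → H_n` into the coordinate at the word `α`. -/
def singleCLM (d n : ℕ) (α : Word d n) : H →L[ℂ] Hn H d n :=
  ((PiLp.continuousLinearEquiv 2 ℂ (fun _ : Word d n => H)).symm.toContinuousLinearMap).comp
    (ContinuousLinearMap.pi (fun β : Word d n =>
      if β = α then ContinuousLinearMap.id ℂ H else 0))

/-- `V_α := V_{α_1} ∘ ⋯ ∘ V_{α_n}` for a word `α`. -/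
def Vword {d : ℕ} (V : Fin d → H →L[ℂ] H) : (n : ℕ) → Word d n → (H →L[ℂ] H)
  | 0, _ => ContinuousLinearMap.id ℂ H
  | (n + 1), α => (V (α 0)).comp (Vword V n (fun i => α i.succ))

/-- `Ṽ_n : H_n → H`, `Ṽ_n((h_α)_α) = Σ_α V_α h_α`. -/
def Vtilde {d : ℕ} (V : Fin d → H →L[ℂ] H) (n : ℕ) : Hn H d n →L[ℂ] H :=
  ∑ α : Word d n, (Vword H V n α).comp (coord H d n α)

/-- Extraction of the `α`-block: `H_{n+j} → H_j`. -/
def blockIn (d n j : ℕ) (α : Word d n) : Hn H d (n + j) →L[ℂ] Hn H d j :=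
  ((PiLp.continuousLinearEquiv 2 ℂ (fun _ : Word d j => H)).symm.toContinuousLinearMap).comp
    (ContinuousLinearMap.pi (fun γ : Word d j => coord H d (n + j) (Fin.append α γ)))

/-- Insertion of the `α`-block: `H_k → H_{n+k}`. -/
def blockOut (d n k : ℕ) (α : Word d n) : Hn H d k →L[ℂ] Hn H d (n + k) :=
  ((PiLp.continuousLinearEquiv 2 ℂ (fun _ : Word d (n + k) => H)).symm.toContinuousLinearMap).comp
    (ContinuousLinearMap.pi (fun β : Word d (n + k) =>
      if (fun i : Fin n => β (Fin.castAdd k i)) = α then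
        coord H d k (fun i : Fin k => β (Fin.natAdd n i)) else 0))

/-- The amplification `I_{E^{⊗n}} ⊗ R : H_{n+j} → H_n` of a map `R : H_j → H`. -/
def ampV (d n j : ℕ) (R : Hn H d j →L[ℂ] H) : Hn H d (n + j) →L[ℂ] Hn H d n :=
  ∑ α : Word d n, (singleCLM H d n α).comp (R.comp (blockIn H d n j α))

/-- The amplification `I_{E^{⊗n}} ⊗ S : H_n → H_{n+k}` of a map `S : H → H_k`. -/
def ampS (d n k : ℕ) (S : H →L[ℂ] Hn H d k) : Hn H d n →L[ℂ] Hn H d (n + k) :=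
  ∑ α : Word d n, (blockOut H d n k α).comp (S.comp (coord H d n α))

/-- The amplification `I_{E^{⊗n}} ⊗ T : H_n → H_n` of a map `T : H → H`. -/
def ampHH (d n : ℕ) (T : H →L[ℂ] H) : Hn H d n →L[ℂ] Hn H d n :=
  ∑ α : Word d n, (singleCLM H d n α).comp (T.comp (coord H d n α))

/-- The amplification `I_{E^{⊗n}} ⊗ R : H_{n+j} → H_{n+k}` of a map `R : H_j → H_k`. -/
def ampGen (d n j k : ℕ) (R : Hn H d j →L[ℂ] Hn H d k) :
    Hn H d (n + j) →L[ℂ] Hn H d (n + k) :=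
  ∑ α : Word d n, (blockOut H d n k α).comp (R.comp (blockIn H d n j α))

/-- The iterates `S^{(n)} : H → H_n` of a map `S : H → H_1`:
`S^{(0)} = I_H` and `S^{(n+1)} = (I_{E^{⊗n}} ⊗ S) ∘ S^{(n)}`. -/
def Siter {d : ℕ} (S : H →L[ℂ] Hn H d 1) : (n : ℕ) → (H →L[ℂ] Hn H d n)
  | 0 => singleCLM H d 0 (fun i => i.elim0)
  | (n + 1) => (ampS H d n 1 S).comp (Siter S n)

/-- The generalized range `R^∞(V) = ⋂_{n ≥ 1} ran Ṽ_n`. -/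
def Rinf {d : ℕ} (V : Fin d → H →L[ℂ] H) : Submodule ℂ H :=
  ⨅ (n : ℕ) (_ : 1 ≤ n), LinearMap.range (Vtilde H V n).toLinearMap

/-- `H_n(K)`: families all of whose entries lie in `K` (realizing `E^{⊗n} ⊗ K`). -/
def HnSub (d n : ℕ) (K : Submodule ℂ H) : Submodule ℂ (Hn H d n) :=
  ⨅ α : Word d n, K.comap (coord H d n α).toLinearMap

/-- The representation is regular: `ran Ṽ` is closed and
`ker Ṽ_n ⊆ ran (I_{E^{⊗n}} ⊗ Ṽ_m)` for all `n, m ≥ 1`. -/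
def RepRegular {d : ℕ} (V : Fin d → H →L[ℂ] H) : Prop :=
  IsClosed (LinearMap.range (Vtilde H V 1).toLinearMap : Set H) ∧
    ∀ n m : ℕ, 1 ≤ n → 1 ≤ m →
      LinearMap.ker (Vtilde H V n).toLinearMap ≤ LinearMap.range (ampV H d n m (Vtilde H V m)).toLinearMap

/-- The reduced minimum modulus `γ(T)`. -/
def rmm {X Y : Type*} [NormedAddCommGroup X] [InnerProductSpace ℂ X]
    [NormedAddCommGroup Y] [InnerProductSpace ℂ Y] (T : X →L[ℂ] Y) : ℝ :=
  sInf ((fun ξ => ‖T ξ‖ / Metric.infDist ξ (LinearMap.ker T.toLinearMap : Set X)) ''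
    {ξ : X | ξ ∉ LinearMap.ker T.toLinearMap})

/-- The cast `H_m → H_k` along an equality `m = k` of word lengths. -/
def castHn (d : ℕ) {m k : ℕ} (h : m = k) : Hn H d m →L[ℂ] Hn H d k := by
  subst h; exact ContinuousLinearMap.id ℂ _

/-- `E^{⊗j} ⊙ K ⊆ H_{j+1}`: families all of whose `1`-blocks lie in `K ⊆ H_1`. -/
def odotSub (d j : ℕ) (K : Submodule ℂ (Hn H d 1)) : Submodule ℂ (Hn H d (j + 1)) :=
  ⨅ α : Word d j, K.comap (blockIn H d j 1 α).toLinearMap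

end


/- ========================  Auxiliary lemmas  ======================== -/

section AuxLemmas

variable {H : Type} [NormedAddCommGroup H] [InnerProductSpace ℂ H] {d : ℕ}

lemma blockOut_apply {n k : ℕ} (α : Word d n) (z : Hn H d k) (β : Word d (n + k)) :
    blockOut H d n k α z β =
      if (fun i : Fin n => β (Fin.castAdd k i)) = α then
        z (fun i : Fin k => β (Fin.natAdd n i)) else 0 := by
  change (if (fun i : Fin n => β (Fin.castAdd k i)) = α then
      coord H d k (fun i : Fin k => β (Fin.natAdd n i)) else 0) z = _
  split_ifs <;> rfl

lemma ampS_apply {n k : ℕ} (T : H →L[ℂ] Hn H d k) (x : Hn H d n) (β : Word d (n + k)) :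
    ampS H d n k T x β =
      T (x (fun i : Fin n => β (Fin.castAdd k i))) (fun i : Fin k => β (Fin.natAdd n i)) := by
  classical
  have h1 : ampS H d n k T x β = ∑ α : Word d n, blockOut H d n k α (T (x α)) β := by
    rw [ampS, ContinuousLinearMap.sum_apply]
    rw [WithLp.ofLp_sum]
    exact Finset.sum_apply β Finset.univ _
  rw [h1]
  simp only [blockOut_apply]
  rw [Finset.sum_ite_eq Finset.univ (fun i : Fin n => β (Fin.castAdd k i))
    (fun α => T (x α) (fun i : Fin k => β (Fin.natAdd n i)))]
  simp

lemma append_recombine {m k : ℕ} (β : Word d (m + k)) :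
    Fin.append (fun i : Fin m => β (Fin.castAdd k i)) (fun i : Fin k => β (Fin.natAdd m i)) = β := by
  funext j
  induction j using Fin.addCases with
  | left i => rw [Fin.append_left]
  | right i => rw [Fin.append_right]

lemma ampS_eq_zero_iff {n k : ℕ} (T : H →L[ℂ] Hn H d k) (x : Hn H d n) :
    ampS H d n k T x = 0 ↔ ∀ α : Word d n, T (x α) = 0 := by
  constructor
  · intro h α
    ext γ
    have h2 : ampS H d n k T x (Fin.append α γ) = (0 : Hn H d (n + k)) (Fin.append α γ) := by
      rw [h]
    rw [ampS_apply] at h2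
    have e1 : (fun i : Fin n => Fin.append α γ (Fin.castAdd k i)) = α :=
      funext fun i => Fin.append_left α γ i
    have e2 : (fun i : Fin k => Fin.append α γ (Fin.natAdd n i)) = γ :=
      funext fun i => Fin.append_right α γ i
    rw [e1, e2] at h2
    exact h2
  · intro h
    ext β
    rw [ampS_apply, h]
    rfl

lemma mem_ker_ampS_iff {n k : ℕ} (T : H →L[ℂ] Hn H d k) (x : Hn H d n) :
    x ∈ LinearMap.ker (ampS H d n k T).toLinearMap ↔ ∀ α : Word d n, T (x α) = 0 := by
  rw [LinearMap.mem_ker]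
  exact ampS_eq_zero_iff T x

lemma Siter_zero_apply (S : H →L[ℂ] Hn H d 1) (h : H) (γ : Word d 0) :
    Siter H S 0 h γ = h := by
  show singleCLM H d 0 (fun i => i.elim0) h γ = h
  change (if γ = (fun i : Fin 0 => i.elim0) then ContinuousLinearMap.id ℂ H else 0) h = h
  rw [if_pos (funext fun i => i.elim0)]
  rfl

lemma Siter_succ_apply (S : H →L[ℂ] Hn H d 1) (n : ℕ) (h : H) :
    Siter H S (n + 1) h = ampS H d n 1 S (Siter H S n h) := rfl

lemma Siter_succ_coord (S : H →L[ℂ] Hn H d 1) (n : ℕ) (z : H) (γ : Word d (n + 1)) :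
    Siter H S (n + 1) z γ =
      S (Siter H S n z (fun i : Fin n => γ (Fin.castAdd 1 i)))
        (fun i : Fin 1 => γ (Fin.natAdd n i)) := by
  show ampS H d n 1 S (Siter H S n z) γ = _
  rw [ampS_apply]

lemma Siter_one_apply (S : H →L[ℂ] Hn H d 1) (h : H) : Siter H S 1 h = S h := by
  ext β
  show ampS H d 0 1 S (Siter H S 0 h) β = S h β
  rw [ampS_apply, Siter_zero_apply]
  have e : (fun i : Fin 1 => β (Fin.natAdd 0 i)) = β :=
    funext fun i => congrArg β (Fin.ext (by simp))
  rw [e]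

lemma Siter_add (S : H →L[ℂ] Hn H d 1) (m : ℕ) :
    ∀ (n : ℕ) (h : H),
      Siter H S (m + n) h = ampS H d m n (Siter H S n) (Siter H S m h) := by
  intro n
  induction n with
  | zero =>
    intro h
    ext β
    rw [ampS_apply, Siter_zero_apply]
    have e : (fun i : Fin m => β (Fin.castAdd 0 i)) = β :=
      funext fun i => congrArg β (Fin.ext (by simp))
    rw [e]
    rfl
  | succ n ih =>
    intro h
    ext β
    show ampS H d (m + n) 1 S (Siter H S (m + n) h) β =
      ampS H d m (n + 1) (Siter H S (n + 1)) (Siter H S m h) β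
    simp only [ampS_apply, Siter_succ_coord, ih]
    have e1 : (fun i : Fin m => β (Fin.castAdd 1 (Fin.castAdd n i))) =
        (fun i : Fin m => β (Fin.castAdd (n + 1) i)) :=
      funext fun i => congrArg β (Fin.ext (by
        simp only [Fin.coe_castAdd]))
    have e2 : (fun i : Fin n => β (Fin.castAdd 1 (Fin.natAdd m i))) =
        (fun i : Fin n => β (Fin.natAdd m (Fin.castAdd 1 i))) :=
      funext fun i => congrArg β (Fin.ext (by
        simp only [Fin.coe_castAdd, Fin.coe_natAdd]))
    have e3 : (fun i : Fin 1 => β (Fin.natAdd (m + n) i)) =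
        (fun i : Fin 1 => β (Fin.natAdd m (Fin.natAdd n i))) :=
      funext fun i => congrArg β (Fin.ext (by
        simp only [Fin.coe_natAdd]; omega))
    rw [e1, e2, e3]

lemma Siter_succ_eq_zero_iff (S : H →L[ℂ] Hn H d 1) (n : ℕ) (h : H) :
    Siter H S (n + 1) h = 0 ↔ ∀ γ : Word d n, S (Siter H S n h γ) = 0 := by
  rw [Siter_succ_apply]
  exact ampS_eq_zero_iff S (Siter H S n h)

lemma Siter_cons (S : H →L[ℂ] Hn H d 1) :
    ∀ (n : ℕ) (h : H) (β : Word d (n + 1)),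
      Siter H S (n + 1) h β =
        Siter H S n (S h (fun _ : Fin 1 => β 0)) (fun i : Fin n => β i.succ) := by
  intro n
  induction n with
  | zero =>
    intro h β
    rw [Siter_one_apply, Siter_zero_apply]
    have e : (fun _ : Fin 1 => β 0) = β :=
      funext fun j => congrArg β (Fin.ext (by omega))
    rw [e]
  | succ n ih =>
    intro h β
    show ampS H d (n + 1) 1 S (Siter H S (n + 1) h) β =
      ampS H d n 1 S (Siter H S n (S h (fun _ : Fin 1 => β 0)))
        (fun i : Fin (n + 1) => β i.succ)
    simp only [ampS_apply, ih]
    have e0 : (fun _ : Fin 1 => β (Fin.castAdd 1 (0 : Fin (n + 1)))) =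
        (fun _ : Fin 1 => β 0) :=
      funext fun j => congrArg β (Fin.ext (by simp))
    have e1 : (fun i : Fin n => β (Fin.castAdd 1 (Fin.succ i))) =
        (fun i : Fin n => β (Fin.succ (Fin.castAdd 1 i))) :=
      funext fun i => congrArg β (Fin.ext (by
        simp only [Fin.coe_castAdd, Fin.val_succ]))
    have e2 : (fun i : Fin 1 => β (Fin.natAdd (n + 1) i)) =
        (fun i : Fin 1 => β (Fin.succ (Fin.natAdd n i))) :=
      funext fun i => congrArg β (Fin.ext (by
        simp only [Fin.coe_natAdd, Fin.val_succ]; omega))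
    rw [e0, e1, e2]

lemma Siter_succ_eq_zero_iff' (S : H →L[ℂ] Hn H d 1) (n : ℕ) (h : H) :
    Siter H S (n + 1) h = 0 ↔ ∀ i : Word d 1, Siter H S n (S h i) = 0 := by
  constructor
  · intro hz i
    ext γ
    set β' : Word d (n + 1) := Fin.cons (i 0) γ with hβ'
    have h2 : Siter H S (n + 1) h β' = (0 : Hn H d (n + 1)) β' := by
      rw [hz]
    rw [Siter_cons] at h2
    have e0 : (fun _ : Fin 1 => β' 0) = i := by
      funext j
      rw [hβ', Fin.cons_zero, show j = (0 : Fin 1) from Fin.ext (by omega)]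
    have e1 : (fun j : Fin n => β' (Fin.succ j)) = γ := by
      funext j
      rw [hβ', Fin.cons_succ]
    rw [e0, e1] at h2
    exact h2
  · intro hz
    ext β
    rw [Siter_cons, hz]
    rfl

end AuxLemmas

theorem stmt_4 (H : Type) [NormedAddCommGroup H] [InnerProductSpace ℂ H]
    (d : ℕ) (hd : 1 ≤ d) (V : Fin d → H →L[ℂ] H)
    (S : H →L[ℂ] Hn H d 1)
    (hgen1 : (Vtilde H V 1).comp (S.comp (Vtilde H V 1)) = Vtilde H V 1)
    (hgen2 : S.comp ((Vtilde H V 1).comp S) = S) :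
    ((∀ m : ℕ, 1 ≤ m →
        LinearMap.ker (ampS H d m 1 S).toLinearMap ≤ LinearMap.range (Siter H S m).toLinearMap) ↔
      (∀ n : ℕ, 1 ≤ n →
        LinearMap.ker (ampS H d 1 n (Siter H S n)).toLinearMap ≤ LinearMap.range S.toLinearMap)) ∧
    ((∀ n : ℕ, 1 ≤ n →
        LinearMap.ker (ampS H d 1 n (Siter H S n)).toLinearMap ≤ LinearMap.range S.toLinearMap) ↔
      (∀ n m : ℕ, 1 ≤ n → 1 ≤ m →
        LinearMap.ker (ampS H d m n (Siter H S n)).toLinearMap ≤ LinearMap.range (Siter H S m).toLinearMap)) ∧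
    ((∀ n m : ℕ, 1 ≤ n → 1 ≤ m →
        LinearMap.ker (ampS H d m n (Siter H S n)).toLinearMap ≤ LinearMap.range (Siter H S m).toLinearMap) ↔
      (∀ n m : ℕ, 1 ≤ n → 1 ≤ m →
        LinearMap.ker (ampS H d m n (Siter H S n)).toLinearMap =
          Submodule.map (Siter H S m).toLinearMap (LinearMap.ker (Siter H S (m + n)).toLinearMap))) := by
  classical
  -- (1) → (3)
  have h13 : (∀ m : ℕ, 1 ≤ m →
        LinearMap.ker (ampS H d m 1 S).toLinearMap ≤ LinearMap.range (Siter H S m).toLinearMap) →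
      (∀ n m : ℕ, 1 ≤ n → 1 ≤ m →
        LinearMap.ker (ampS H d m n (Siter H S n)).toLinearMap ≤ LinearMap.range (Siter H S m).toLinearMap) := by
    intro h1
    have key : ∀ n m : ℕ, 1 ≤ m →
        LinearMap.ker (ampS H d m (n + 1) (Siter H S (n + 1))).toLinearMap ≤
          LinearMap.range (Siter H S m).toLinearMap := by
      intro n
      induction n with
      | zero =>
        intro m hm x hx
        refine h1 m hm ?_
        rw [mem_ker_ampS_iff] at hx ⊢
        intro α
        rw [← Siter_one_apply S (x α)]
        exact hx α
      | succ n ih =>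
        intro m hm x hx
        rw [mem_ker_ampS_iff] at hx
        have hz : ampS H d (m + (n + 1)) 1 S (ampS H d m (n + 1) (Siter H S (n + 1)) x) = 0 := by
          rw [ampS_eq_zero_iff]
          intro β
          rw [ampS_apply]
          exact (Siter_succ_eq_zero_iff S (n + 1) _).mp (hx _) _
        obtain ⟨g, hg⟩ := h1 (m + (n + 1)) (by omega) (LinearMap.mem_ker.mpr hz)
        simp only [ContinuousLinearMap.coe_coe] at hg
        have hg2 : ampS H d m (n + 1) (Siter H S (n + 1)) (x - Siter H S m g) = 0 := by
          rw [map_sub, ← Siter_add S m (n + 1) g, hg, sub_self]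
        obtain ⟨g2, hg2'⟩ := ih m hm (LinearMap.mem_ker.mpr hg2)
        refine ⟨g + g2, ?_⟩
        simp only [ContinuousLinearMap.coe_coe] at hg2' ⊢
        rw [map_add, hg2']
        abel
    intro n m hn hm
    obtain ⟨n, rfl⟩ : ∃ k, n = k + 1 := ⟨n - 1, by omega⟩
    exact key n m hm
  -- (3) → (1)
  have h31 : (∀ n m : ℕ, 1 ≤ n → 1 ≤ m →
        LinearMap.ker (ampS H d m n (Siter H S n)).toLinearMap ≤ LinearMap.range (Siter H S m).toLinearMap) →
      (∀ m : ℕ, 1 ≤ m →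
        LinearMap.ker (ampS H d m 1 S).toLinearMap ≤ LinearMap.range (Siter H S m).toLinearMap) := by
    intro h3 m hm x hx
    refine h3 1 m le_rfl hm ?_
    rw [mem_ker_ampS_iff] at hx ⊢
    intro α
    rw [Siter_one_apply]
    exact hx α
  -- (3) → (2)
  have h32 : (∀ n m : ℕ, 1 ≤ n → 1 ≤ m →
        LinearMap.ker (ampS H d m n (Siter H S n)).toLinearMap ≤ LinearMap.range (Siter H S m).toLinearMap) →
      (∀ n : ℕ, 1 ≤ n →
        LinearMap.ker (ampS H d 1 n (Siter H S n)).toLinearMap ≤ LinearMap.range S.toLinearMap) := by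
    intro h3 n hn x hx
    obtain ⟨g, hg⟩ := h3 n 1 hn le_rfl hx
    refine ⟨g, ?_⟩
    simp only [ContinuousLinearMap.coe_coe] at hg ⊢
    rw [← Siter_one_apply]
    exact hg
  -- (2) → (3)
  have h23 : (∀ n : ℕ, 1 ≤ n →
        LinearMap.ker (ampS H d 1 n (Siter H S n)).toLinearMap ≤ LinearMap.range S.toLinearMap) →
      (∀ n m : ℕ, 1 ≤ n → 1 ≤ m →
        LinearMap.ker (ampS H d m n (Siter H S n)).toLinearMap ≤ LinearMap.range (Siter H S m).toLinearMap) := by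
    intro h2
    have key : ∀ m n : ℕ, 1 ≤ n →
        LinearMap.ker (ampS H d (m + 1) n (Siter H S n)).toLinearMap ≤
          LinearMap.range (Siter H S (m + 1)).toLinearMap := by
      intro m
      induction m with
      | zero =>
        intro n hn x hx
        obtain ⟨g, hg⟩ := h2 n hn hx
        refine ⟨g, ?_⟩
        show Siter H S 1 g = x
        rw [Siter_one_apply]
        exact hg
      | succ m ih =>
        intro n hn x hx
        rw [mem_ker_ampS_iff] at hx
        have hex : ∀ α : Word d (m + 1), ∃ g : H,
            S g = (WithLp.toLp 2 (fun γ : Word d 1 => x (Fin.append α γ)) : Hn H d 1) := by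
          intro α
          have hmem : (WithLp.toLp 2 (fun γ : Word d 1 => x (Fin.append α γ)) : Hn H d 1) ∈
              LinearMap.ker (ampS H d 1 n (Siter H S n)).toLinearMap :=
            (mem_ker_ampS_iff _ _).mpr (fun γ => hx (Fin.append α γ))
          exact h2 n hn hmem
        choose y hy using hex
        have hy1 : ∀ α : Word d (m + 1), Siter H S (n + 1) (y α) = 0 := by
          intro α
          rw [Siter_succ_eq_zero_iff']
          intro i
          rw [show S (y α) i = x (Fin.append α i) from by rw [hy α]]
          exact hx (Fin.append α i)
        obtain ⟨g, hg⟩ := ih (n + 1) (by omega)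
          ((mem_ker_ampS_iff (Siter H S (n + 1)) (WithLp.toLp 2 y : Hn H d (m + 1))).mpr hy1)
        refine ⟨g, ?_⟩
        show ampS H d (m + 1) 1 S (Siter H S (m + 1) g) = x
        simp only [ContinuousLinearMap.coe_coe] at hg
        rw [hg]
        ext β
        rw [ampS_apply, PiLp.toLp_apply]
        rw [show S (y (fun i : Fin (m + 1) => β (Fin.castAdd 1 i)))
              (fun i : Fin 1 => β (Fin.natAdd (m + 1) i)) =
            x (Fin.append (fun i : Fin (m + 1) => β (Fin.castAdd 1 i))
              (fun i : Fin 1 => β (Fin.natAdd (m + 1) i))) from by rw [hy _]]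
        rw [append_recombine β]
    intro n m hn hm
    obtain ⟨m, rfl⟩ : ∃ k, m = k + 1 := ⟨m - 1, by omega⟩
    exact key m n hn
  -- (3) → (4)
  have h34 : (∀ n m : ℕ, 1 ≤ n → 1 ≤ m →
        LinearMap.ker (ampS H d m n (Siter H S n)).toLinearMap ≤ LinearMap.range (Siter H S m).toLinearMap) →
      (∀ n m : ℕ, 1 ≤ n → 1 ≤ m →
        LinearMap.ker (ampS H d m n (Siter H S n)).toLinearMap =
          Submodule.map (Siter H S m).toLinearMap (LinearMap.ker (Siter H S (m + n)).toLinearMap)) := by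
    intro h3 n m hn hm
    apply le_antisymm
    · intro x hx
      obtain ⟨g, hg⟩ := h3 n m hn hm hx
      refine ⟨g, LinearMap.mem_ker.mpr ?_, hg⟩
      simp only [ContinuousLinearMap.coe_coe] at hg ⊢
      rw [Siter_add S m n g, hg]
      exact LinearMap.mem_ker.mp hx
    · rintro x ⟨g, hg1, rfl⟩
      refine LinearMap.mem_ker.mpr ?_
      simp only [ContinuousLinearMap.coe_coe]
      rw [← Siter_add S m n g]
      exact LinearMap.mem_ker.mp hg1
  -- (4) → (3)
  have h43 : (∀ n m : ℕ, 1 ≤ n → 1 ≤ m →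
        LinearMap.ker (ampS H d m n (Siter H S n)).toLinearMap =
          Submodule.map (Siter H S m).toLinearMap (LinearMap.ker (Siter H S (m + n)).toLinearMap)) →
      (∀ n m : ℕ, 1 ≤ n → 1 ≤ m →
        LinearMap.ker (ampS H d m n (Siter H S n)).toLinearMap ≤ LinearMap.range (Siter H S m).toLinearMap) := by
    intro h4 n m hn hm x hx
    rw [h4 n m hn hm] at hx
    obtain ⟨g, _, hg⟩ := hx
    exact ⟨g, hg⟩
  exact ⟨⟨fun h => h32 (h13 h), fun h => h31 (h23 h)⟩, ⟨h23, h32⟩, ⟨h34, h43⟩⟩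
end

section
/- Assume Ṽ is bounded below, and assume that both the tuple (V_1,…,V_d) and its Cauchy dual tuple (V'_1,…,V'_d) have the generating wandering subspace property. Let A be a bounded operator on H with ‖A‖ ≤ 1 and A V_i = V_i A for every i. Then A*^n → 0 strongly on H (i.e. A*^n h → 0 for every h ∈ H) if and only if A*^n w → 0 for every w ∈ W := ker(Ṽ*) (equivalently, the compression P_W A|_W is a pure contraction; note W is A*-invariant and (P_W A|_W)*^n = A*^n|_W). -/
open scoped InnerProductSpace

noncomputable section

variable (H : Type) [NormedAddCommGroup H] [InnerProductSpace ℂ H]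

/-- The generating wandering subspace property for a tuple `V`. -/
def GWS {d : ℕ} (V : Fin d → H →L[ℂ] H) : Prop :=
  ∃ M : Submodule ℂ H, IsClosed (M : Set H) ∧
    (∀ n : ℕ, 1 ≤ n → ∀ ξ ∈ HnSub H d n M, ∀ w ∈ M, (inner ℂ w (Vtilde H V n ξ) : ℂ) = 0) ∧
    (⨆ n : ℕ, Submodule.map (Vtilde H V n).toLinearMap (HnSub H d n M)).topologicalClosure = ⊤

end


section Aux
set_option linter.unusedSectionVars false
open Filter ContinuousLinearMap
variable {H : Type} [NormedAddCommGroup H] [InnerProductSpace ℂ H] [CompleteSpace H] {d : ℕ}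

lemma coord_apply (n : ℕ) (α : Word d n) (ξ : Hn H d n) : coord H d n α ξ = ξ α := rfl

lemma singleCLM_apply (n : ℕ) (α β : Word d n) (h : H) :
    singleCLM H d n α h β = if β = α then h else 0 := by
  simp only [singleCLM, ContinuousLinearMap.comp_apply, ContinuousLinearEquiv.coe_coe,
    PiLp.continuousLinearEquiv_symm_apply, PiLp.toLp_apply,
    ContinuousLinearMap.pi_apply]
  split_ifs <;> simp

lemma Vtilde_apply (V : Fin d → H →L[ℂ] H) (n : ℕ) (ξ : Hn H d n) :
    Vtilde H V n ξ = ∑ α : Word d n, Vword H V n α (ξ α) := by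
  simp [Vtilde, ContinuousLinearMap.sum_apply, coord_apply]

lemma Hn_decomp (ξ : Hn H d 1) : ξ = ∑ α : Word d 1, singleCLM H d 1 α (ξ α) := by
  refine PiLp.ext fun β => ?_
  have : (∑ α : Word d 1, singleCLM H d 1 α (ξ α)) β
      = ∑ α : Word d 1, (singleCLM H d 1 α (ξ α)) β := by
    rw [WithLp.ofLp_sum]; exact Finset.sum_apply β Finset.univ _
  rw [this]
  simp [singleCLM_apply]


lemma adj_Vt_apply (V : Fin d → H →L[ℂ] H) (x : H) (α : Word d 1) :
    (ContinuousLinearMap.adjoint (Vtilde H V 1) x) α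
      = ContinuousLinearMap.adjoint (V (α 0)) x := by
  apply ext_inner_right ℂ
  intro y
  have h1 : (inner ℂ ((ContinuousLinearMap.adjoint (Vtilde H V 1) x) α) y : ℂ)
      = inner ℂ (ContinuousLinearMap.adjoint (Vtilde H V 1) x) (singleCLM H d 1 α y) := by
    rw [PiLp.inner_apply]
    rw [Finset.sum_eq_single α]
    · rw [singleCLM_apply, if_pos rfl]
    · intro β _ hβ
      rw [singleCLM_apply, if_neg hβ, inner_zero_right]
    · intro hα; exact absurd (Finset.mem_univ α) hα
  have h2 : Vtilde H V 1 (singleCLM H d 1 α y) = V (α 0) y := by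
    rw [Vtilde_apply]
    rw [Finset.sum_eq_single α]
    · rw [singleCLM_apply, if_pos rfl]; rfl
    · intro β _ hβ
      rw [singleCLM_apply, if_neg hβ, map_zero]
    · intro hα; exact absurd (Finset.mem_univ α) hα
  rw [h1, ContinuousLinearMap.adjoint_inner_left, h2, ContinuousLinearMap.adjoint_inner_left]

lemma Vtilde_succ (U : Fin d → H →L[ℂ] H) (k : ℕ) (η : Hn H d (k+1)) :
    Vtilde H U (k+1) η
      = ∑ i : Fin d, U i (Vtilde H U k (WithLp.toLp 2 fun β => η (Fin.cons i β))) := by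
  rw [Vtilde_apply]
  rw [← (Fin.consEquiv (fun _ : Fin (k+1) => Fin d)).sum_comp
    (fun α => Vword H U (k+1) α (η α))]
  rw [Fintype.sum_prod_type]
  refine Finset.sum_congr rfl (fun i _ => ?_)
  rw [Vtilde_apply, map_sum]
  refine Finset.sum_congr rfl (fun β _ => ?_)
  have hc : (Fin.consEquiv (fun _ : Fin (k+1) => Fin d)) (i, β) = Fin.cons i β := rfl
  rw [hc]
  show Vword H U (k+1) (Fin.cons i β) (η (Fin.cons i β)) = _
  have : Vword H U (k+1) (Fin.cons i β)
      = (U i).comp (Vword H U k β) := by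
    simp only [Vword, Fin.cons_zero, Fin.cons_succ]
  rw [this]; rfl


lemma Vt_single (V : Fin d → H →L[ℂ] H) (α : Word d 1) (y : H) :
    Vtilde H V 1 (singleCLM H d 1 α y) = V (α 0) y := by
  rw [Vtilde_apply]
  rw [Finset.sum_eq_single α]
  · rw [singleCLM_apply, if_pos rfl]; rfl
  · intro β _ hβ
    rw [singleCLM_apply, if_neg hβ, map_zero]
  · intro hα; exact absurd (Finset.mem_univ α) hα

lemma word1_eq (α : Word d 1) : α = (fun _ : Fin 1 => α 0) :=
  funext fun m => by rw [Subsingleton.elim m 0]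

lemma mem_HnSub {n : ℕ} {K : Submodule ℂ H} {η : Hn H d n} :
    η ∈ HnSub H d n K ↔ ∀ α, η α ∈ K := by
  simp [HnSub, Submodule.mem_iInf, Submodule.mem_comap, coord_apply]

lemma zero_Hn_apply (n : ℕ) (α : Word d n) : (0 : Hn H d n) α = 0 := rfl

lemma Vtilde_insert (U : Fin d → H →L[ℂ] H) (i : Fin d) (n : ℕ) (ξ : Hn H d n) :
    Vtilde H U (n+1) (WithLp.toLp 2 fun α : Word d (n+1) => if α 0 = i then ξ (fun m => α m.succ) else 0)
      = U i (Vtilde H U n ξ) := by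
  have htail : ∀ (j : Fin d) (β : Word d n),
      (fun m : Fin n => (Fin.cons j β : Word d (n+1)) (Fin.succ m)) = β := by
    intro j β; funext m
    exact @Fin.cons_succ n (fun _ => Fin d) j β m
  rw [Vtilde_succ]
  rw [Finset.sum_eq_single i]
  · congr 2
    refine PiLp.ext fun β => ?_
    show (if (Fin.cons i β : Word d (n+1)) 0 = i
      then ξ (fun m => (Fin.cons i β : Word d (n+1)) m.succ) else 0) = ξ β
    rw [htail i β, Fin.cons_zero, if_pos rfl]
  · intro j _ hji
    have hz : (WithLp.toLp 2 fun β : Word d n => (WithLp.toLp 2 fun α : Word d (n+1) =>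
        if α 0 = i then ξ (fun m => α m.succ) else 0) (Fin.cons j β))
        = (0 : Hn H d n) := by
      refine PiLp.ext fun β => ?_
      show (if (Fin.cons j β : Word d (n+1)) 0 = i
        then ξ (fun m => (Fin.cons j β : Word d (n+1)) m.succ) else 0) = _
      rw [Fin.cons_zero, if_neg hji]; rfl
    rw [hz, map_zero, map_zero]
  · intro hα; exact absurd (Finset.mem_univ i) hα

end Aux

set_option maxHeartbeats 1000000 in
theorem stmt_19 (H : Type) [NormedAddCommGroup H] [InnerProductSpace ℂ H] [CompleteSpace H]
    (d : ℕ) (hd : 1 ≤ d) (V : Fin d → H →L[ℂ] H)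
    (c : ℝ) (hc : 0 < c) (hbb : ∀ ξ : Hn H d 1, c * ‖ξ‖ ≤ ‖Vtilde H V 1 ξ‖)
    (T : Hn H d 1 →L[ℂ] Hn H d 1)
    (hT1 : ((ContinuousLinearMap.adjoint (Vtilde H V 1)).comp (Vtilde H V 1)).comp T =
      ContinuousLinearMap.id ℂ (Hn H d 1))
    (hT2 : T.comp ((ContinuousLinearMap.adjoint (Vtilde H V 1)).comp (Vtilde H V 1)) =
      ContinuousLinearMap.id ℂ (Hn H d 1))
    (hGWS : GWS H V)
    (hGWS' : GWS H (fun i : Fin d =>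
      (Vtilde H V 1).comp (T.comp (singleCLM H d 1 (fun _ : Fin 1 => i)))))
    (A : H →L[ℂ] H) (hA : ‖A‖ ≤ 1)
    (hcomm : ∀ i : Fin d, A.comp (V i) = (V i).comp A) :
    (∀ h : H, Filter.Tendsto (fun n : ℕ => ((ContinuousLinearMap.adjoint A) ^ n) h)
        Filter.atTop (nhds 0)) ↔
      (∀ w ∈ LinearMap.ker (ContinuousLinearMap.adjoint (Vtilde H V 1)).toLinearMap,
        Filter.Tendsto (fun n : ℕ => ((ContinuousLinearMap.adjoint A) ^ n) w)
          Filter.atTop (nhds 0)) := by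
  classical
  constructor
  · intro hall w _; exact hall w
  intro hw h
  set B : H →L[ℂ] H := ContinuousLinearMap.adjoint A with hB
  set Vt : Hn H d 1 →L[ℂ] H := Vtilde H V 1 with hVt
  set Vd : Fin d → H →L[ℂ] H := fun i : Fin d =>
      (Vtilde H V 1).comp (T.comp (singleCLM H d 1 (fun _ : Fin 1 => i))) with hVd
  -- basic norm facts
  have hBnorm : ‖B‖ ≤ 1 := by
    rw [hB]
    calc ‖ContinuousLinearMap.adjoint A‖ = ‖A‖ := ContinuousLinearMap.adjoint.norm_map A
      _ ≤ 1 := hA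
  have hBn_norm : ∀ (m : ℕ) (x : H), ‖(B ^ m) x‖ ≤ ‖x‖ := by
    intro m
    induction m with
    | zero => intro x; simp
    | succ m ih =>
      intro x
      have e : (B ^ (m+1)) x = (B ^ m) (B x) := by
        rw [pow_succ]; rfl
      rw [e]
      refine le_trans (ih (B x)) ?_
      calc ‖B x‖ ≤ ‖B‖ * ‖x‖ := B.le_opNorm x
        _ ≤ 1 * ‖x‖ := mul_le_mul_of_nonneg_right hBnorm (norm_nonneg x)
        _ = ‖x‖ := one_mul _
  -- commutation of B with adjoints of V i
  have hACadj : ∀ i : Fin d,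
      (ContinuousLinearMap.adjoint (V i)).comp B = B.comp (ContinuousLinearMap.adjoint (V i)) := by
    intro i
    have h0 := congrArg ContinuousLinearMap.adjoint (hcomm i)
    rw [ContinuousLinearMap.adjoint_comp, ContinuousLinearMap.adjoint_comp] at h0
    exact h0
  have hcommn : ∀ (i : Fin d) (n : ℕ) (x : H),
      ContinuousLinearMap.adjoint (V i) ((B ^ n) x)
        = (B ^ n) (ContinuousLinearMap.adjoint (V i) x) := by
    intro i n
    induction n with
    | zero => intro x; simp
    | succ n ih =>
      intro x
      have e : ∀ z : H, (B ^ (n+1)) z = (B ^ n) (B z) := by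
        intro z; rw [pow_succ]; rfl
      rw [e, ih (B x), e]
      congr 1
      exact ContinuousLinearMap.ext_iff.mp (hACadj i) x
  -- applied versions of hT1, hT2
  have hT1app : ∀ z : Hn H d 1, ContinuousLinearMap.adjoint Vt (Vt (T z)) = z := by
    intro z
    have := ContinuousLinearMap.ext_iff.mp hT1 z
    simpa using this
  have hT2app : ∀ z : Hn H d 1, T (ContinuousLinearMap.adjoint Vt (Vt z)) = z := by
    intro z
    have := ContinuousLinearMap.ext_iff.mp hT2 z
    simpa using this
  -- Kronecker relation
  have kron : ∀ (j i : Fin d) (z : H),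
      ContinuousLinearMap.adjoint (V j) (Vd i z) = if j = i then z else 0 := by
    intro j i z
    have h1 : ContinuousLinearMap.adjoint (V j) (Vd i z)
        = (ContinuousLinearMap.adjoint Vt (Vd i z)) (fun _ : Fin 1 => j) := by
      rw [hVt, adj_Vt_apply]
    rw [h1]
    have h2 : Vd i z = Vt (T (singleCLM H d 1 (fun _ : Fin 1 => i) z)) := rfl
    rw [h2, hT1app, singleCLM_apply]
    by_cases hji : j = i
    · subst hji; rw [if_pos rfl, if_pos rfl]
    · rw [if_neg (fun hfe => hji (congrFun hfe 0)), if_neg hji]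
  -- the main claim, by induction on word length
  have claim : ∀ (k : ℕ) (η : Hn H d k),
      (∀ α, η α ∈ LinearMap.ker (ContinuousLinearMap.adjoint Vt).toLinearMap) →
      Filter.Tendsto (fun n : ℕ => (B ^ n) (Vtilde H Vd k η)) Filter.atTop (nhds 0) := by
    intro k
    induction k with
    | zero =>
      intro η hη
      have h0 : Vtilde H Vd 0 η = η default := by
        rw [Vtilde_apply, Fintype.sum_unique]; rfl
      rw [h0]
      exact hw (η default) (hη default)
    | succ k ih =>
      intro η hη
      set y : H := Vtilde H Vd (k+1) η with hy
      have hyj : ∀ j : Fin d, ContinuousLinearMap.adjoint (V j) y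
          = Vtilde H Vd k (WithLp.toLp 2 fun β => η (Fin.cons j β)) := by
        intro j
        rw [hy, Vtilde_succ, map_sum]
        rw [Finset.sum_congr rfl
          (fun i _ => kron j i (Vtilde H Vd k (WithLp.toLp 2 fun β => η (Fin.cons i β))))]
        simp
      have key : ∀ n : ℕ, Vt (T (ContinuousLinearMap.adjoint Vt ((B ^ n) y)))
          = ∑ α : Word d 1, Vt (T (singleCLM H d 1 α
              ((B ^ n) (Vtilde H Vd k (WithLp.toLp 2 fun β => η (Fin.cons (α 0) β)))))) := by
        intro n
        conv_lhs => rw [Hn_decomp (ContinuousLinearMap.adjoint Vt ((B ^ n) y))]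
        rw [map_sum, map_sum]
        refine Finset.sum_congr rfl fun α _ => ?_
        congr 2
        rw [hVt, adj_Vt_apply, hcommn, hyj]
      have hrem : Filter.Tendsto
          (fun n : ℕ => Vt (T (ContinuousLinearMap.adjoint Vt ((B ^ n) y))))
          Filter.atTop (nhds 0) := by
        simp only [key]
        rw [show (0 : H) = ∑ _α : Word d 1, (0 : H) by simp]
        refine tendsto_finset_sum _ fun α _ => ?_
        have hcont := ((Vt.comp (T.comp (singleCLM H d 1 α))).continuous.tendsto 0)
        have hterm := hcont.comp (ih (WithLp.toLp 2 fun β => η (Fin.cons (α 0) β)) (fun β => hη _))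
        rw [map_zero] at hterm
        exact hterm
      have hwn : ∀ n : ℕ, (B ^ n) y - Vt (T (ContinuousLinearMap.adjoint Vt ((B ^ n) y)))
          ∈ LinearMap.ker (ContinuousLinearMap.adjoint Vt).toLinearMap := by
        intro n
        rw [LinearMap.mem_ker, ContinuousLinearMap.coe_coe, map_sub, hT1app, sub_self]
      set u : ℕ → ℝ := fun n => ‖(B ^ n) y‖ with hu
      have hu_anti : Antitone u := by
        refine antitone_nat_of_succ_le fun n => ?_
        have e : (B ^ (n+1)) y = B ((B ^ n) y) := by rw [pow_succ']; rfl
        show ‖(B ^ (n+1)) y‖ ≤ ‖(B ^ n) y‖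
        rw [e]
        calc ‖B ((B ^ n) y)‖ ≤ ‖B‖ * ‖(B ^ n) y‖ := B.le_opNorm _
          _ ≤ 1 * ‖(B ^ n) y‖ := mul_le_mul_of_nonneg_right hBnorm (norm_nonneg _)
          _ = ‖(B ^ n) y‖ := one_mul _
      have hbdd : BddBelow (Set.range u) := ⟨0, by rintro _ ⟨n, rfl⟩; exact norm_nonneg _⟩
      have hLten : Filter.Tendsto u Filter.atTop (nhds (⨅ n, u n)) :=
        tendsto_atTop_ciInf hu_anti hbdd
      set L : ℝ := ⨅ n, u n with hLdef
      have hL0 : 0 ≤ L := le_ciInf fun n => norm_nonneg _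
      have hLr : ∀ n : ℕ, L ≤ ‖Vt (T (ContinuousLinearMap.adjoint Vt ((B ^ n) y)))‖ := by
        intro n
        set r : H := Vt (T (ContinuousLinearMap.adjoint Vt ((B ^ n) y))) with hr
        have h1 : ∀ m : ℕ, L ≤ ‖(B ^ m) ((B ^ n) y - r)‖ + ‖r‖ := by
          intro m
          have e1 : (B ^ (m+n)) y = (B ^ m) ((B ^ n) y) := by rw [pow_add]; rfl
          calc L ≤ u (m+n) := ciInf_le hbdd (m+n)
            _ = ‖(B ^ m) ((B ^ n) y - r) + (B ^ m) r‖ := by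
                rw [hu]
                show ‖(B ^ (m+n)) y‖ = _
                rw [e1, ← map_add, sub_add_cancel]
            _ ≤ ‖(B ^ m) ((B ^ n) y - r)‖ + ‖(B ^ m) r‖ := norm_add_le _ _
            _ ≤ ‖(B ^ m) ((B ^ n) y - r)‖ + ‖r‖ := add_le_add_right (hBn_norm m r) _
        have h2 : Filter.Tendsto (fun m : ℕ => ‖(B ^ m) ((B ^ n) y - r)‖ + ‖r‖)
            Filter.atTop (nhds (0 + ‖r‖)) := by
          refine Filter.Tendsto.add ?_ tendsto_const_nhds
          have := (hw ((B ^ n) y - r) (hwn n)).norm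
          simpa using this
        have := ge_of_tendsto h2 (Filter.Eventually.of_forall h1)
        simpa using this
      have hr0 : Filter.Tendsto
          (fun n : ℕ => ‖Vt (T (ContinuousLinearMap.adjoint Vt ((B ^ n) y)))‖)
          Filter.atTop (nhds 0) := by
        have := hrem.norm; simpa using this
      have hLle : L ≤ 0 := ge_of_tendsto hr0 (Filter.Eventually.of_forall hLr)
      have hLeq : L = 0 := le_antisymm hLle hL0
      have hfin : Filter.Tendsto u Filter.atTop (nhds 0) := by rwa [hLeq] at hLten
      exact tendsto_zero_iff_norm_tendsto_zero.mpr hfin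
  -- the wandering subspace of the dual is contained in W
  obtain ⟨M', hM'closed, hM'wand, hM'gen⟩ := hGWS'
  have hM'W : ∀ m' ∈ M', m' ∈ LinearMap.ker (ContinuousLinearMap.adjoint Vt).toLinearMap := by
    intro m' hm'
    have hperp : ∀ (i : Fin d) (z : H), (inner ℂ m' (Vd i z) : ℂ) = 0 := by
      intro i
      set f : H →L[ℂ] ℂ := (innerSL ℂ m').comp (Vd i) with hf
      have hker : (⨆ n : ℕ, Submodule.map (Vtilde H Vd n).toLinearMap (HnSub H d n M'))
          ≤ LinearMap.ker f.toLinearMap := by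
        refine iSup_le fun n => ?_
        rintro x ⟨ξ, hξ, rfl⟩
        rw [LinearMap.mem_ker]
        show (inner ℂ m' (Vd i (Vtilde H Vd n ξ)) : ℂ) = 0
        rw [← Vtilde_insert]
        refine hM'wand (n+1) (by omega) _ ?_ m' hm'
        rw [mem_HnSub]
        intro α
        by_cases hcase : α 0 = i
        · simp only [hcase, if_pos rfl]
          exact mem_HnSub.mp hξ _
        · simp only [if_neg hcase]
          exact M'.zero_mem
      have htop : (⊤ : Submodule ℂ H) ≤ LinearMap.ker f.toLinearMap := by
        rw [← hM'gen]
        exact Submodule.topologicalClosure_minimal _ hker (ContinuousLinearMap.isClosed_ker f)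
      intro z
      have hz := htop (Submodule.mem_top : z ∈ ⊤)
      rw [LinearMap.mem_ker] at hz
      simpa [hf] using hz
    rw [LinearMap.mem_ker, ContinuousLinearMap.coe_coe]
    have hVj : ∀ j : Fin d, ContinuousLinearMap.adjoint (V j) m' = 0 := by
      intro j
      apply ext_inner_right ℂ
      intro x
      rw [ContinuousLinearMap.adjoint_inner_left, inner_zero_left]
      set ξ0 : Hn H d 1 :=
        ContinuousLinearMap.adjoint Vt (Vt (singleCLM H d 1 (fun _ : Fin 1 => j) x)) with hξ0
      have e1 : V j x = Vt (T ξ0) := by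
        rw [hξ0, hT2app, hVt, Vt_single]
      have e2 : Vt (T ξ0) = ∑ α : Word d 1, Vd (α 0) (ξ0 α) := by
        conv_lhs => rw [Hn_decomp ξ0]
        rw [map_sum, map_sum]
        refine Finset.sum_congr rfl fun α _ => ?_
        show Vt (T (singleCLM H d 1 α (ξ0 α))) = Vd (α 0) (ξ0 α)
        rw [word1_eq α]
        rfl
      rw [e1, e2, inner_sum]
      exact Finset.sum_eq_zero fun α _ => hperp (α 0) (ξ0 α)
    rw [Hn_decomp (ContinuousLinearMap.adjoint Vt m')]
    refine Finset.sum_eq_zero fun α _ => ?_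
    rw [hVt, adj_Vt_apply, hVj, map_zero]
  -- density of the span over W and conclusion
  have hsup : (⨆ n : ℕ, Submodule.map (Vtilde H Vd n).toLinearMap (HnSub H d n M'))
      ≤ (⨆ n : ℕ, Submodule.map (Vtilde H Vd n).toLinearMap
          (HnSub H d n (LinearMap.ker (ContinuousLinearMap.adjoint Vt).toLinearMap))) := by
    refine iSup_mono fun n => Submodule.map_mono ?_
    intro η hη
    rw [mem_HnSub] at hη ⊢
    exact fun α => hM'W _ (hη α)
  have hdense : h ∈ closure ((⨆ n : ℕ, Submodule.map (Vtilde H Vd n).toLinearMap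
      (HnSub H d n (LinearMap.ker (ContinuousLinearMap.adjoint Vt).toLinearMap)) : Submodule ℂ H) : Set H) := by
    have h1 : (⊤ : Submodule ℂ H) ≤ (⨆ n : ℕ, Submodule.map (Vtilde H Vd n).toLinearMap
        (HnSub H d n (LinearMap.ker (ContinuousLinearMap.adjoint Vt).toLinearMap))).topologicalClosure := by
      rw [← hM'gen]
      exact Submodule.topologicalClosure_mono hsup
    have h2 := h1 (Submodule.mem_top : h ∈ ⊤)
    exact h2
  have hDtend : ∀ g ∈ (⨆ n : ℕ, Submodule.map (Vtilde H Vd n).toLinearMap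
      (HnSub H d n (LinearMap.ker (ContinuousLinearMap.adjoint Vt).toLinearMap))),
      Filter.Tendsto (fun n : ℕ => (B ^ n) g) Filter.atTop (nhds 0) := by
    intro g hg
    refine Submodule.iSup_induction
      (motive := fun g => Filter.Tendsto (fun n : ℕ => (B ^ n) g) Filter.atTop (nhds 0))
      _ hg ?_ ?_ ?_
    · rintro k x ⟨ξ, hξ, rfl⟩
      exact claim k ξ (mem_HnSub.mp hξ)
    · simp only [map_zero]
      exact tendsto_const_nhds
    · intro x y hx hy
      simp only [map_add]
      simpa using hx.add hy
  rw [NormedAddCommGroup.tendsto_nhds_zero]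
  intro ε hε
  obtain ⟨g, hgD, hgh⟩ := Metric.mem_closure_iff.mp hdense (ε/2) (by positivity)
  have h2 := NormedAddCommGroup.tendsto_nhds_zero.mp (hDtend g hgD) (ε/2) (by positivity)
  filter_upwards [h2] with n hn
  have hsplit : (B ^ n) h = (B ^ n) (h - g) + (B ^ n) g := by
    rw [← map_add, sub_add_cancel]
  calc ‖(B ^ n) h‖ ≤ ‖(B ^ n) (h - g)‖ + ‖(B ^ n) g‖ := by
        rw [hsplit]; exact norm_add_le _ _
    _ ≤ ‖h - g‖ + ‖(B ^ n) g‖ := add_le_add_left (hBn_norm n (h - g)) _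
    _ < ε/2 + ε/2 := by
        refine add_lt_add_of_lt_of_lt ?_ hn
        rw [← dist_eq_norm]
        exact hgh
    _ = ε := add_halves ε
end
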